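/- Let f, g be probability densities on ℝ² supported on the closed unit disk, and define H(θ) = d_{W2}²(P_θ f, P_θ g). For n ≥ 1 let θ_k = 2πk/n, k = 0, …, n−1, be the uniform angular grid. Then the quadrature error satisfies |(1/2π) ∫₀^{2π} H(θ) dθ − (1/n) Σ_{k=0}^{n−1} H(θ_k)| ≤ 8π/n. -/

import Mathlib

open MeasureTheory Real Set

/-- CDF of a density `μ` on `ℝ`: `F_μ(t) = ∫_{-∞}^t μ`. -/
noncomputable def cdfOf (μ : ℝ → ℝ) (t : ℝ) : ℝ := ∫ x in Set.Iic t, μ x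

/-- Quantile function `Q_μ(z) = inf {t : F_μ(t) ≥ z}`. -/
noncomputable def quantileOf (μ : ℝ → ℝ) (z : ℝ) : ℝ := sInf {t : ℝ | z ≤ cdfOf μ t}

/-- `d_{Wp}^p(μ, ν) = ∫₀¹ |Q_μ(z) − Q_ν(z)|^p dz`. -/
noncomputable def wassersteinPow (p : ℝ) (μ ν : ℝ → ℝ) : ℝ :=
  ∫ z in Set.Ioo (0:ℝ) 1, |quantileOf μ z - quantileOf ν z| ^ p

/-- 1-D `p`-Wasserstein distance between densities. -/
noncomputable def wasserstein (p : ℝ) (μ ν : ℝ → ℝ) : ℝ :=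
  (wassersteinPow p μ ν) ^ (1 / p)

/-- Line projection of an image `f : ℝ² → ℝ` at angle `θ`:
`P_θ f(s) = ∫ f(s(cos θ, sin θ) + t(−sin θ, cos θ)) dt`. -/
noncomputable def lineProj (f : ℝ × ℝ → ℝ) (θ : ℝ) (s : ℝ) : ℝ :=
  ∫ t : ℝ, f (s * Real.cos θ - t * Real.sin θ, s * Real.sin θ + t * Real.cos θ)

/-- `d_{SWp}^p(f, g) = (1/2π) ∫₀^{2π} d_{Wp}^p(P_θ f, P_θ g) dθ`. -/
noncomputable def slicedWassersteinPow (p : ℝ) (f g : ℝ × ℝ → ℝ) : ℝ :=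
  (1 / (2 * Real.pi)) * ∫ θ in Set.Ioo (0:ℝ) (2 * Real.pi),
    wassersteinPow p (lineProj f θ) (lineProj g θ)

/-- Sliced `p`-Wasserstein distance between two images. -/
noncomputable def slicedWasserstein (p : ℝ) (f g : ℝ × ℝ → ℝ) : ℝ :=
  (slicedWassersteinPow p f g) ^ (1 / p)

/-- Rotation of an image by angle `α`: `(R_α g)(x) = g(R_α⁻¹ x)`. -/
noncomputable def rotImage (α : ℝ) (g : ℝ × ℝ → ℝ) : ℝ × ℝ → ℝ :=
  fun x => g (x.1 * Real.cos α + x.2 * Real.sin α, -x.1 * Real.sin α + x.2 * Real.cos α)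

lemma integrable_of_int_one {f : ℝ × ℝ → ℝ} (h : ∫ x : ℝ × ℝ, f x = 1) :
    Integrable f := by
  by_contra hc
  rw [MeasureTheory.integral_undef hc] at h; norm_num at h

def halfPlane (θ t : ℝ) : Set (ℝ × ℝ) := {x | x.1 * Real.cos θ + x.2 * Real.sin θ ≤ t}

lemma measurableSet_halfPlane (θ t : ℝ) : MeasurableSet (halfPlane θ t) := by
  have : Continuous fun x : ℝ × ℝ => x.1 * Real.cos θ + x.2 * Real.sin θ := by fun_prop
  exact (isClosed_le this continuous_const).measurableSet

lemma chord_sq_le (θ θ' : ℝ) :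
    (Real.cos θ - Real.cos θ') ^ 2 + (Real.sin θ - Real.sin θ') ^ 2 ≤ (θ - θ') ^ 2 := by
  have h1 := Real.one_sub_sq_div_two_le_cos (x := θ - θ')
  have h2 := Real.cos_sub θ θ'
  have h3 := Real.sin_sq_add_cos_sq θ
  have h4 := Real.sin_sq_add_cos_sq θ'
  nlinarith

section Density
variable {f : ℝ × ℝ → ℝ}

lemma cdf_mono' (hpos : ∀ x, 0 ≤ f x) (hfi : Integrable f) (θ : ℝ) {t t' : ℝ} (h : t ≤ t') :
    ∫ x in halfPlane θ t, f x ≤ ∫ x in halfPlane θ t', f x := by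
  apply setIntegral_mono_set hfi.integrableOn
  · exact Filter.Eventually.of_forall hpos
  · exact HasSubset.Subset.eventuallyLE (fun x hx => le_trans hx h)

lemma cdf_eq_zero (hsupp : ∀ x : ℝ × ℝ, 1 < x.1 ^ 2 + x.2 ^ 2 → f x = 0)
    (θ : ℝ) {t : ℝ} (ht : t < -1) : ∫ x in halfPlane θ t, f x = 0 := by
  apply setIntegral_eq_zero_of_forall_eq_zero
  intro x hx
  apply hsupp
  have hcs := Real.sin_sq_add_cos_sq θ
  have hx' : x.1 * Real.cos θ + x.2 * Real.sin θ ≤ t := hx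
  nlinarith [sq_nonneg (x.1 * Real.sin θ - x.2 * Real.cos θ), sq_nonneg (x.1 * Real.cos θ + x.2 * Real.sin θ + 1)]

lemma cdf_eq_one (hsupp : ∀ x : ℝ × ℝ, 1 < x.1 ^ 2 + x.2 ^ 2 → f x = 0)
    (hint : ∫ x : ℝ × ℝ, f x = 1) (θ : ℝ) {t : ℝ} (ht : 1 ≤ t) :
    ∫ x in halfPlane θ t, f x = 1 := by
  have hfi := integrable_of_int_one hint
  have hcompl : ∫ x in (halfPlane θ t)ᶜ, f x = 0 := by
    apply setIntegral_eq_zero_of_forall_eq_zero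
    intro x hx
    apply hsupp
    have hx' : t < x.1 * Real.cos θ + x.2 * Real.sin θ := not_le.mp hx
    have hcs := Real.sin_sq_add_cos_sq θ
    nlinarith [sq_nonneg (x.1 * Real.sin θ - x.2 * Real.cos θ), sq_nonneg (x.1 * Real.cos θ + x.2 * Real.sin θ - 1)]
  have := integral_add_compl (measurableSet_halfPlane θ t) hfi
  rw [hcompl] at *
  linarith [this.trans hint]

lemma cdf_shift (hpos : ∀ x, 0 ≤ f x)
    (hsupp : ∀ x : ℝ × ℝ, 1 < x.1 ^ 2 + x.2 ^ 2 → f x = 0)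
    (hfi : Integrable f) (θ θ' t : ℝ) :
    ∫ x in halfPlane θ t, f x ≤ ∫ x in halfPlane θ' (t + |θ - θ'|), f x := by
  rw [← integral_indicator (measurableSet_halfPlane θ t),
    ← integral_indicator (measurableSet_halfPlane θ' (t + |θ - θ'|))]
  apply integral_mono (hfi.indicator (measurableSet_halfPlane θ t))
    (hfi.indicator (measurableSet_halfPlane θ' (t + |θ - θ'|)))
  intro x
  by_cases hx : x ∈ halfPlane θ t
  · rw [Set.indicator_of_mem hx]
    by_cases hfx : f x = 0
    · rw [hfx]
      exact Set.indicator_apply_nonneg (fun _ => hpos x)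
    · have hd : x.1 ^ 2 + x.2 ^ 2 ≤ 1 := by
        by_contra hc
        exact hfx (hsupp x (not_le.mp hc))
      have hmem : x ∈ halfPlane θ' (t + |θ - θ'|) := by
        have hx' : x.1 * Real.cos θ + x.2 * Real.sin θ ≤ t := hx
        have hch := chord_sq_le θ θ'
        have habs : (0:ℝ) ≤ |θ - θ'| := abs_nonneg _
        have habs2 : (θ - θ') ^ 2 = |θ - θ'| ^ 2 := (sq_abs _).symm
        show x.1 * Real.cos θ' + x.2 * Real.sin θ' ≤ t + |θ - θ'|
        nlinarith [sq_nonneg (x.1 * (Real.sin θ - Real.sin θ') - x.2 * (Real.cos θ - Real.cos θ')),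
          sq_nonneg (x.1 * (Real.cos θ - Real.cos θ') + x.2 * (Real.sin θ - Real.sin θ') + |θ - θ'|)]
      rw [Set.indicator_of_mem hmem]
  · rw [Set.indicator_of_notMem hx]
    exact Set.indicator_apply_nonneg (fun _ => hpos x)

end Density

noncomputable def rotEquiv (θ : ℝ) : (ℝ × ℝ) ≃ᵐ (ℝ × ℝ) :=
  (Complex.measurableEquivRealProd.symm).trans
    (((rotation (Circle.exp θ)).toHomeomorph.toMeasurableEquiv).trans
      Complex.measurableEquivRealProd)

lemma rotEquiv_mp (θ : ℝ) : MeasurePreserving (rotEquiv θ) := by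
  have h1 := Complex.volume_preserving_equiv_real_prod.symm Complex.measurableEquivRealProd
  have h2 := (rotation (Circle.exp θ)).measurePreserving
  have h3 := Complex.volume_preserving_equiv_real_prod
  exact h3.comp (h2.comp h1)

lemma rotEquiv_apply (θ : ℝ) (p : ℝ × ℝ) :
    rotEquiv θ p = (p.1 * Real.cos θ - p.2 * Real.sin θ, p.1 * Real.sin θ + p.2 * Real.cos θ) := by
  simp only [rotEquiv, MeasurableEquiv.trans_apply,
    Homeomorph.toMeasurableEquiv_coe, LinearIsometryEquiv.coe_toHomeomorph, rotation_apply]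
  simp [Complex.measurableEquivRealProd, Complex.ext_iff, Circle.coe_exp,
    Complex.exp_ofReal_mul_I_re, Complex.exp_ofReal_mul_I_im, Complex.mul_re, Complex.mul_im]
  constructor <;> ring

lemma rotEquiv_symm_apply (θ : ℝ) (x : ℝ × ℝ) :
    (rotEquiv θ).symm x
      = (x.1 * Real.cos θ + x.2 * Real.sin θ, -x.1 * Real.sin θ + x.2 * Real.cos θ) := by
  have h : rotEquiv θ (x.1 * Real.cos θ + x.2 * Real.sin θ,
      -x.1 * Real.sin θ + x.2 * Real.cos θ) = x := by
    rw [rotEquiv_apply]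
    have hcs := Real.sin_sq_add_cos_sq θ
    rw [Prod.ext_iff]
    constructor <;> dsimp
    · linear_combination x.1 * hcs
    · linear_combination x.2 * hcs
  conv_lhs => rw [← h, MeasurableEquiv.symm_apply_apply]

lemma rotEquiv_image (θ t : ℝ) :
    rotEquiv θ '' (Set.Iic t ×ˢ (Set.univ : Set ℝ))
      = {x : ℝ × ℝ | x.1 * Real.cos θ + x.2 * Real.sin θ ≤ t} := by
  ext x
  rw [MeasurableEquiv.image_eq_preimage_symm]
  simp [rotEquiv_symm_apply]

lemma cdf_rep (f : ℝ × ℝ → ℝ) (hf : Integrable f) (θ t : ℝ) :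
    cdfOf (lineProj f θ) t
      = ∫ x in {x : ℝ × ℝ | x.1 * Real.cos θ + x.2 * Real.sin θ ≤ t}, f x := by
  have hcomp : Integrable (f ∘ (rotEquiv θ)) :=
    ((rotEquiv_mp θ).integrable_comp_emb (rotEquiv θ).measurableEmbedding).mpr hf
  have h1 : cdfOf (lineProj f θ) t = ∫ s in Set.Iic t, ∫ u, (f ∘ rotEquiv θ) (s, u) := by
    unfold cdfOf lineProj
    congr 1; ext s; congr 1; ext u; rw [Function.comp_apply, rotEquiv_apply]
  have h2 : (∫ s in Set.Iic t, ∫ u, (f ∘ rotEquiv θ) (s, u))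
      = ∫ p in (Set.Iic t ×ˢ (Set.univ : Set ℝ)), (f ∘ rotEquiv θ) p := by
    rw [show ((volume : Measure (ℝ × ℝ))) = (volume : Measure ℝ).prod volume from
      Measure.volume_eq_prod ℝ ℝ, setIntegral_prod _ (hcomp.integrableOn)]
    simp
  rw [h1, h2, ← rotEquiv_image θ t,
    (rotEquiv_mp θ).setIntegral_image_emb (rotEquiv θ).measurableEmbedding]
  rfl

lemma cdf_rep' (f : ℝ × ℝ → ℝ) (hf : Integrable f) (θ t : ℝ) :
    cdfOf (lineProj f θ) t = ∫ x in halfPlane θ t, f x := cdf_rep f hf θ t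

section Quantile

variable {f : ℝ × ℝ → ℝ}

/-- `1` belongs to the quantile defining set. -/
lemma one_mem_S (hint : ∫ x : ℝ × ℝ, f x = 1)
    (hsupp : ∀ x : ℝ × ℝ, 1 < x.1 ^ 2 + x.2 ^ 2 → f x = 0)
    (θ : ℝ) {z : ℝ} (hz : z ≤ 1) : (1:ℝ) ∈ {t : ℝ | z ≤ cdfOf (lineProj f θ) t} := by
  have := cdf_eq_one hsupp hint θ (le_refl 1)
  simp only [Set.mem_setOf_eq, cdf_rep' f (integrable_of_int_one hint) θ 1, this]
  exact hz

lemma neg_one_mem_lb (hint : ∫ x : ℝ × ℝ, f x = 1)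
    (hsupp : ∀ x : ℝ × ℝ, 1 < x.1 ^ 2 + x.2 ^ 2 → f x = 0)
    (θ : ℝ) {z : ℝ} (hz : 0 < z) :
    ∀ t ∈ {t : ℝ | z ≤ cdfOf (lineProj f θ) t}, (-1:ℝ) ≤ t := by
  intro t ht
  by_contra hc
  push_neg at hc
  have h0 : cdfOf (lineProj f θ) t = 0 := by
    rw [cdf_rep' f (integrable_of_int_one hint) θ t]
    exact cdf_eq_zero hsupp θ hc
  simp only [Set.mem_setOf_eq, h0] at ht
  linarith

lemma S_bddBelow (hint : ∫ x : ℝ × ℝ, f x = 1)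
    (hsupp : ∀ x : ℝ × ℝ, 1 < x.1 ^ 2 + x.2 ^ 2 → f x = 0)
    (θ : ℝ) {z : ℝ} (hz : 0 < z) :
    BddBelow {t : ℝ | z ≤ cdfOf (lineProj f θ) t} :=
  ⟨-1, neg_one_mem_lb hint hsupp θ hz⟩

lemma quantile_mem_Icc (hint : ∫ x : ℝ × ℝ, f x = 1)
    (hsupp : ∀ x : ℝ × ℝ, 1 < x.1 ^ 2 + x.2 ^ 2 → f x = 0)
    (θ : ℝ) {z : ℝ} (hz : z ∈ Set.Ioo (0:ℝ) 1) :
    quantileOf (lineProj f θ) z ∈ Set.Icc (-1:ℝ) 1 := by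
  constructor
  · exact le_csInf ⟨1, one_mem_S hint hsupp θ hz.2.le⟩ (neg_one_mem_lb hint hsupp θ hz.1)
  · exact csInf_le (S_bddBelow hint hsupp θ hz.1) (one_mem_S hint hsupp θ hz.2.le)

lemma quantile_shift (hpos : ∀ x, 0 ≤ f x) (hint : ∫ x : ℝ × ℝ, f x = 1)
    (hsupp : ∀ x : ℝ × ℝ, 1 < x.1 ^ 2 + x.2 ^ 2 → f x = 0)
    (θ θ' : ℝ) {z : ℝ} (hz : z ∈ Set.Ioo (0:ℝ) 1) :
    quantileOf (lineProj f θ') z ≤ quantileOf (lineProj f θ) z + |θ - θ'| := by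
  have hfi := integrable_of_int_one hint
  have key : ∀ t ∈ {t : ℝ | z ≤ cdfOf (lineProj f θ) t},
      quantileOf (lineProj f θ') z ≤ t + |θ - θ'| := by
    intro t ht
    apply csInf_le (S_bddBelow hint hsupp θ' hz.1)
    have h1 : z ≤ cdfOf (lineProj f θ) t := ht
    have h2 : cdfOf (lineProj f θ) t ≤ cdfOf (lineProj f θ') (t + |θ - θ'|) := by
      rw [cdf_rep' f hfi, cdf_rep' f hfi]
      exact cdf_shift hpos hsupp hfi θ θ' t
    exact le_trans h1 h2
  have : quantileOf (lineProj f θ') z - |θ - θ'| ≤ quantileOf (lineProj f θ) z := by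
    apply le_csInf ⟨1, one_mem_S hint hsupp θ hz.2.le⟩
    intro t ht
    linarith [key t ht]
  linarith

lemma quantile_lip (hpos : ∀ x, 0 ≤ f x) (hint : ∫ x : ℝ × ℝ, f x = 1)
    (hsupp : ∀ x : ℝ × ℝ, 1 < x.1 ^ 2 + x.2 ^ 2 → f x = 0)
    (θ θ' : ℝ) {z : ℝ} (hz : z ∈ Set.Ioo (0:ℝ) 1) :
    |quantileOf (lineProj f θ) z - quantileOf (lineProj f θ') z| ≤ |θ - θ'| := by
  rw [abs_sub_le_iff]
  constructor
  · have := quantile_shift hpos hint hsupp θ' θ hz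
    rw [abs_sub_comm] at this
    linarith
  · have := quantile_shift hpos hint hsupp θ θ' hz
    linarith

lemma quantile_monoOn (hint : ∫ x : ℝ × ℝ, f x = 1)
    (hsupp : ∀ x : ℝ × ℝ, 1 < x.1 ^ 2 + x.2 ^ 2 → f x = 0)
    (θ : ℝ) : MonotoneOn (quantileOf (lineProj f θ)) (Set.Ioo (0:ℝ) 1) := by
  intro z₁ hz₁ z₂ hz₂ h
  apply csInf_le_csInf (S_bddBelow hint hsupp θ hz₁.1)
    ⟨1, one_mem_S hint hsupp θ hz₂.2.le⟩
  intro t ht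
  exact le_trans h ht

end Quantile

lemma abs_rpow_two (a : ℝ) : |a| ^ (2:ℝ) = (a) ^ 2 := by
  rw [show (2:ℝ) = ((2:ℕ):ℝ) by norm_num, Real.rpow_natCast, sq_abs]

section Hfun
variable {f g : ℝ × ℝ → ℝ}
  (hfpos : ∀ x, 0 ≤ f x) (hgpos : ∀ x, 0 ≤ g x)
  (hfint : ∫ x : ℝ × ℝ, f x = 1) (hgint : ∫ x : ℝ × ℝ, g x = 1)
  (hfsupp : ∀ x : ℝ × ℝ, 1 < x.1 ^ 2 + x.2 ^ 2 → f x = 0)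
  (hgsupp : ∀ x : ℝ × ℝ, 1 < x.1 ^ 2 + x.2 ^ 2 → g x = 0)

include hfint hgint hfsupp hgsupp

lemma phi_integrableOn (θ : ℝ) :
    IntegrableOn (fun z => |quantileOf (lineProj f θ) z - quantileOf (lineProj g θ) z| ^ (2:ℝ))
      (Set.Ioo (0:ℝ) 1) volume := by
  have hm1 : AEMeasurable (quantileOf (lineProj f θ)) (volume.restrict (Set.Ioo (0:ℝ) 1)) :=
    aemeasurable_restrict_of_monotoneOn measurableSet_Ioo (quantile_monoOn hfint hfsupp θ)
  have hm2 : AEMeasurable (quantileOf (lineProj g θ)) (volume.restrict (Set.Ioo (0:ℝ) 1)) :=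
    aemeasurable_restrict_of_monotoneOn measurableSet_Ioo (quantile_monoOn hgint hgsupp θ)
  have hm : AEMeasurable
      (fun z => |quantileOf (lineProj f θ) z - quantileOf (lineProj g θ) z| ^ (2:ℝ))
      (volume.restrict (Set.Ioo (0:ℝ) 1)) := by
    simp_rw [abs_rpow_two]
    exact (hm1.sub hm2).pow_const 2
  apply Integrable.mono' (g := fun _ => (4:ℝ))
    (integrableOn_const (by simp))
    hm.aestronglyMeasurable
  filter_upwards [ae_restrict_mem measurableSet_Ioo] with z hz
  have h1 := quantile_mem_Icc hfint hfsupp θ hz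
  have h2 := quantile_mem_Icc hgint hgsupp θ hz
  rw [abs_rpow_two, Real.norm_eq_abs, abs_of_nonneg (sq_nonneg _)]
  nlinarith [h1.1, h1.2, h2.1, h2.2]

include hfpos hgpos

lemma H_lip (θ θ' : ℝ) :
    |wassersteinPow 2 (lineProj f θ) (lineProj g θ)
      - wassersteinPow 2 (lineProj f θ') (lineProj g θ')| ≤ 8 * |θ - θ'| := by
  unfold wassersteinPow
  rw [← integral_sub (phi_integrableOn hfint hgint hfsupp hgsupp θ)
      (phi_integrableOn hfint hgint hfsupp hgsupp θ')]
  have hb : ∀ᵐ z ∂(volume.restrict (Set.Ioo (0:ℝ) 1)),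
      ‖(|quantileOf (lineProj f θ) z - quantileOf (lineProj g θ) z| ^ (2:ℝ))
        - (|quantileOf (lineProj f θ') z - quantileOf (lineProj g θ') z| ^ (2:ℝ))‖
        ≤ 8 * |θ - θ'| := by
    filter_upwards [ae_restrict_mem measurableSet_Ioo] with z hz
    have h1 := quantile_mem_Icc hfint hfsupp θ hz
    have h2 := quantile_mem_Icc hgint hgsupp θ hz
    have h3 := quantile_mem_Icc hfint hfsupp θ' hz
    have h4 := quantile_mem_Icc hgint hgsupp θ' hz
    have l1 := quantile_lip hfpos hfint hfsupp θ θ' hz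
    have l2 := quantile_lip hgpos hgint hgsupp θ θ' hz
    rw [abs_rpow_two, abs_rpow_two, Real.norm_eq_abs, abs_le]
    have e1 := abs_le.mp l1
    have e2 := abs_le.mp l2
    constructor <;> nlinarith [h1.1, h1.2, h2.1, h2.2, h3.1, h3.2, h4.1, h4.2,
      e1.1, e1.2, e2.1, e2.2, abs_nonneg (θ - θ')]
  have := norm_setIntegral_le_of_norm_le_const_ae (μ := volume) (s := Set.Ioo (0:ℝ) 1)
      (C := 8 * |θ - θ'|) (by simp) hb
  calc _ ≤ (8 * |θ - θ'|) * (volume (Set.Ioo (0:ℝ) 1)).toReal := this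
    _ = 8 * |θ - θ'| := by simp

end Hfun

lemma quadrature {H : ℝ → ℝ} (hlip : ∀ θ θ', |H θ - H θ'| ≤ 8 * |θ - θ'|)
    (n : ℕ) (hn : 1 ≤ n) :
    |(1 / (2 * π)) * (∫ θ in (0:ℝ)..(2 * π), H θ)
      - (1 / n) * ∑ k ∈ Finset.range n, H (2 * π * k / n)| ≤ 8 * π / n := by
  have hπ : (0:ℝ) < π := Real.pi_pos
  have hn0 : (0:ℝ) < n := by exact_mod_cast hn
  have Hcont : Continuous H := by
    have : LipschitzWith 8 H := by
      apply LipschitzWith.of_dist_le_mul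
      intro x y
      simpa [Real.dist_eq] using hlip x y
    exact this.continuous
  set a : ℕ → ℝ := fun k => 2 * π * k / n with ha
  have hlen : ∀ k : ℕ, a (k+1) - a k = 2 * π / n := by
    intro k; simp only [ha]; push_cast; field_simp; ring
  have hsum : ∑ k ∈ Finset.range n, ∫ θ in a k..a (k+1), H θ = ∫ θ in (0:ℝ)..(2*π), H θ := by
    rw [intervalIntegral.sum_integral_adjacent_intervals
      (fun k _ => Hcont.intervalIntegrable _ _)]
    norm_num [ha]
    rw [mul_div_assoc, div_self (ne_of_gt hn0), mul_one]
  have key : ∀ k : ℕ, |(∫ θ in a k..a (k+1), H θ) - (2 * π / n) * H (a k)|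
      ≤ 16 * π ^ 2 / n ^ 2 := by
    intro k
    have hab : a k ≤ a (k+1) := by
      have h0 : (0:ℝ) < 2 * π / n := by positivity
      linarith [hlen k]
    have hsub : (∫ θ in a k..a (k+1), H θ) - (2 * π / n) * H (a k)
        = ∫ θ in a k..a (k+1), (H θ - H (a k)) := by
      rw [intervalIntegral.integral_sub (Hcont.intervalIntegrable _ _)
        intervalIntegrable_const, intervalIntegral.integral_const, smul_eq_mul, hlen k]
    rw [hsub]
    have hbd : ∀ᵐ t ∂(volume.restrict (Set.uIoc (a k) (a (k+1)))),
        ‖H t - H (a k)‖ ≤ 8 * (t - a k) := by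
      apply ae_restrict_of_forall_mem measurableSet_uIoc
      intro t ht
      rw [Set.uIoc_of_le hab] at ht
      have h1 := hlip t (a k)
      rw [Real.norm_eq_abs]
      calc |H t - H (a k)| ≤ 8 * |t - a k| := h1
        _ = 8 * (t - a k) := by rw [abs_of_nonneg (by linarith [ht.1])]
    have hint8 : IntervalIntegrable (fun t => 8 * (t - a k)) volume (a k) (a (k+1)) := by
      apply Continuous.intervalIntegrable; fun_prop
    have := (intervalIntegral.norm_integral_le_of_norm_le hab
      (by rw [← Set.uIoc_of_le hab]; exact (ae_restrict_iff' measurableSet_uIoc).mp hbd)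
      hint8).trans (le_abs_self _)
    have hval : (∫ t in a k..a (k+1), 8 * (t - a k)) = 16 * π ^ 2 / n ^ 2 := by
      rw [intervalIntegral.integral_const_mul]
      rw [show (fun t => t - a k) = (fun t => (fun x : ℝ => x) (t - a k)) from rfl]
      rw [intervalIntegral.integral_comp_sub_right (fun x : ℝ => x) (a k)]
      rw [integral_id, sub_self, hlen k]
      field_simp; ring
    calc ‖∫ θ in a k..a (k+1), (H θ - H (a k))‖ ≤ |∫ t in a k..a (k+1), 8 * (t - a k)| := this
      _ = 16 * π ^ 2 / n ^ 2 := by rw [hval, abs_of_nonneg (by positivity)]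
  have split : (1 / (2 * π)) * (∫ θ in (0:ℝ)..(2 * π), H θ)
      - (1 / n) * ∑ k ∈ Finset.range n, H (2 * π * k / n)
      = (1 / (2 * π)) * ∑ k ∈ Finset.range n,
        ((∫ θ in a k..a (k+1), H θ) - (2 * π / n) * H (a k)) := by
    rw [← hsum, Finset.sum_sub_distrib, mul_sub]
    congr 1
    rw [Finset.mul_sum, Finset.mul_sum]
    apply Finset.sum_congr rfl
    intro k _
    have : a k = 2 * π * k / n := rfl
    rw [this]
    field_simp
  rw [split, abs_mul, abs_of_nonneg (by positivity : (0:ℝ) ≤ 1 / (2*π))]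
  calc (1 / (2 * π)) * |∑ k ∈ Finset.range n,
        ((∫ θ in a k..a (k+1), H θ) - (2 * π / n) * H (a k))|
      ≤ (1 / (2 * π)) * ∑ k ∈ Finset.range n, |(∫ θ in a k..a (k+1), H θ) - (2 * π / n) * H (a k)| := by
        apply mul_le_mul_of_nonneg_left (Finset.abs_sum_le_sum_abs _ _) (by positivity)
    _ ≤ (1 / (2 * π)) * ∑ k ∈ Finset.range n, (16 * π ^ 2 / n ^ 2) := by
        apply mul_le_mul_of_nonneg_left (Finset.sum_le_sum fun k _ => key k) (by positivity)
    _ = 8 * π / n := by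
        rw [Finset.sum_const, Finset.card_range, nsmul_eq_mul]
        field_simp; ring

/-- Uniform angular quadrature error. For probability densities `f, g` supported on the closed
unit disk, with `H(θ) = d_{W2}²(P_θ f, P_θ g)` and the uniform grid `θ_k = 2πk/n`,
`|(1/2π) ∫₀^{2π} H(θ) dθ − (1/n) Σ_{k<n} H(θ_k)| ≤ 8π/n`. -/
theorem angular_quadrature_error
    (f g : ℝ × ℝ → ℝ)
    (hfnonneg : ∀ x, 0 ≤ f x) (hgnonneg : ∀ x, 0 ≤ g x)
    (hfint : ∫ x : ℝ × ℝ, f x = 1) (hgint : ∫ x : ℝ × ℝ, g x = 1)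
    (hfsupp : ∀ x : ℝ × ℝ, 1 < x.1 ^ 2 + x.2 ^ 2 → f x = 0)
    (hgsupp : ∀ x : ℝ × ℝ, 1 < x.1 ^ 2 + x.2 ^ 2 → g x = 0)
    (n : ℕ) (hn : 1 ≤ n) :
    |(1 / (2 * π)) * (∫ θ in (0:ℝ)..(2 * π),
        wassersteinPow 2 (lineProj f θ) (lineProj g θ))
      - (1 / n) * ∑ k ∈ Finset.range n,
          wassersteinPow 2 (lineProj f (2 * π * k / n)) (lineProj g (2 * π * k / n))|
      ≤ 8 * π / n := by
  exact quadrature (fun θ θ' => H_lip hfnonneg hgnonneg hfint hgint hfsupp hgsupp θ θ') n hn
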